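/- There exist random variables such that each coordinate sequence is exchangeable while the sequence of joint vectors is not. Concretely: there exist ℝ²-valued random vectors X_1 = (x_1¹, x_1²), X_2 = (x_2¹, x_2²), X_3 = (x_3¹, x_3²) such that (x_1^i, x_2^i, x_3^i) is exchangeable for each i ∈ {1,2}, but (X_1, X_2, X_3) is not exchangeable as an ℝ²-valued sequence. -/

import Mathlib

open MeasureTheory

/-- A finite sequence of random variables is exchangeable if its joint law is
invariant under every permutation of the indices. -/
def Exchangeable {Ω : Type*} [MeasurableSpace Ω] {E : Type*} [MeasurableSpace E]
    (μ : Measure Ω) {n : ℕ} (X : Fin n → Ω → E) : Prop :=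
  ∀ σ : Equiv.Perm (Fin n),
    μ.map (fun ω => fun i => X (σ i) ω) = μ.map (fun ω => fun i => X i ω)

noncomputable section Aux

abbrev Om := Fin 3 → Bool

def mu : Measure Om := (8 : ENNReal)⁻¹ • ∑ ω : Om, Measure.dirac ω

lemma map_fsum {α : Type*} [MeasurableSpace α] {f : Om → α} (hf : Measurable f)
    (μ : Om → Measure Om) :
    (∑ ω : Om, μ ω).map f = ∑ ω : Om, (μ ω).map f := by
  classical
  induction (Finset.univ : Finset Om) using Finset.induction_on with
  | empty => simp
  | insert _ _ h ih => simp [Finset.sum_insert h, Measure.map_add _ _ hf, ih]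

lemma mu_map_comp (τ : Equiv.Perm (Fin 3)) :
    mu.map (fun ω : Om => ω ∘ τ) = mu := by
  have hm : Measurable (fun ω : Om => ω ∘ τ) := Measurable.of_discrete
  rw [mu, Measure.map_smul, map_fsum hm]
  congr 1
  simp only [Measure.map_dirac' hm]
  exact Equiv.sum_comp (Equiv.arrowCongr τ.symm (Equiv.refl Bool)) (fun ω => Measure.dirac ω)

lemma mu_apply (A : Set Om) : mu A = (8:ENNReal)⁻¹ * ∑ ω : Om, A.indicator 1 ω := by
  simp [mu, Measure.coe_finset_sum, Measure.dirac_apply]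

def XX : Fin 3 → Om → (Fin 2 → ℝ) := fun i ω j => if ω (i + j.castSucc) then 1 else 0

end Aux

/-- Coordinate-wise exchangeability does not imply joint exchangeability: there exist
ℝ²-valued random vectors `X 1, X 2, X 3` whose coordinate sequences are each
exchangeable while the sequence of joint vectors is not. -/
theorem coordinatewise_not_joint_exchangeable :
    ∃ (Ω : Type) (_ : MeasurableSpace Ω) (μ : Measure Ω),
      IsProbabilityMeasure μ ∧
      ∃ X : Fin 3 → Ω → (Fin 2 → ℝ),
        (∀ i, Measurable (X i)) ∧
        (∀ j : Fin 2, Exchangeable μ (fun i ω => X i ω j)) ∧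
        ¬ Exchangeable μ X := by
  refine ⟨Om, inferInstance, mu, ?_, XX, fun i => Measurable.of_discrete, ?_, ?_⟩
  · constructor
    rw [mu_apply]
    simp only [Set.indicator_univ, Pi.one_apply, Finset.sum_const, Finset.card_univ,
      Fintype.card_pi, smul_eq_mul, mul_one]
    norm_num
    exact ENNReal.inv_mul_cancel (by norm_num) (by norm_num)
  · -- coordinatewise exchangeable
    intro j σ
    set c : Fin 3 := j.castSucc
    set τ : Equiv.Perm (Fin 3) :=
      (Equiv.addRight c).symm.trans (σ.trans (Equiv.addRight c)) with hτ
    have key : (fun ω : Om => fun i => XX (σ i) ω j)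
        = (fun ω : Om => fun i => XX i ω j) ∘ (fun ω => ω ∘ τ) := by
      funext ω i
      simp [XX, hτ, Function.comp, c]
    rw [key, ← Measure.map_map Measurable.of_discrete Measurable.of_discrete, mu_map_comp]
  · -- not jointly exchangeable
    intro h
    have hS : MeasurableSet {f : Fin 3 → (Fin 2 → ℝ) | f 0 1 = f 1 0} := by
      apply measurableSet_eq_fun
      · exact (measurable_pi_apply 1).comp (measurable_pi_apply 0)
      · exact (measurable_pi_apply 0).comp (measurable_pi_apply 1)
    have := h (Equiv.swap 0 1)
    have h2 := congrArg (fun m : Measure (Fin 3 → Fin 2 → ℝ) =>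
      m {f | f 0 1 = f 1 0}) this
    simp only [Measure.map_apply Measurable.of_discrete hS] at h2
    have e1 : ((fun ω : Om => fun i => XX ((Equiv.swap 0 1) i) ω) ⁻¹'
        {f | f 0 1 = f 1 0}) = {ω : Om | ω 2 = ω 0} := by
      ext ω
      simp only [Set.mem_preimage, Set.mem_setOf_eq, XX, Equiv.swap_apply_left,
        Equiv.swap_apply_right]
      norm_num
      cases h0 : ω 0 <;> cases h2 : ω 2 <;> simp [h0, h2, show ((1:Fin 3)+1) = 2 by decide]
    have e2 : ((fun ω : Om => fun i => XX i ω) ⁻¹' {f | f 0 1 = f 1 0}) = Set.univ := by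
      ext ω
      simp [XX, show ((0:Fin 3)+1) = 1 by decide, show ((1:Fin 3)+0) = 1 by decide]
    rw [e1, e2, mu_apply, mu_apply] at h2
    have c1 : (∑ ω : Om, ({ω : Om | ω 2 = ω 0}).indicator (1 : Om → ENNReal) ω) = 4 := by
      simp only [Set.indicator_apply, Set.mem_setOf_eq, Pi.one_apply]
      rw [Finset.sum_boole]
      have hc : (Finset.univ.filter fun ω : Om => ω 2 = ω 0).card = 4 := by decide
      rw [hc]; norm_num
    have c2 : (∑ ω : Om, (Set.univ : Set Om).indicator (1 : Om → ENNReal) ω) = 8 := by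
      simp
    rw [c1, c2] at h2
    have h3 := congrArg (fun x => (8:ENNReal) * x) h2
    simp only [← mul_assoc] at h3
    rw [
      ENNReal.mul_inv_cancel (by norm_num) (by norm_num), one_mul, one_mul] at h3
    norm_num at h3
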